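/- Let u be C² on a domain D ⊆ ℝ^m (m ≥ 2) and λ ≠ 0 a real number. Then u satisfies Δu + λ²u = 0 on D if and only if for every x ∈ D, lim_{r→0⁺} (M•(u, B_r(x)) − u(x))/r² = −λ² u(x)/(2(m+2)). -/

import Mathlib

open MeasureTheory Metric Filter Real
open scoped Topology ENNReal

noncomputable def ballMean (m : ℕ) (u : EuclideanSpace ℝ (Fin m) → ℝ)
    (x : EuclideanSpace ℝ (Fin m)) (r : ℝ) : ℝ :=
  ⨍ y in ball x r, u y

noncomputable def lap (m : ℕ) (u : EuclideanSpace ℝ (Fin m) → ℝ)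
    (x : EuclideanSpace ℝ (Fin m)) : ℝ :=
  ∑ i : Fin m, fderiv ℝ (fun y => fderiv ℝ u y (EuclideanSpace.single i 1)) x
    (EuclideanSpace.single i 1)

variable {m : ℕ}

lemma isom_setIntegral {F : Type*} [NormedAddCommGroup F] [NormedSpace ℝ F]
    (e : EuclideanSpace ℝ (Fin m) ≃ₗᵢ[ℝ] EuclideanSpace ℝ (Fin m))
    (f : EuclideanSpace ℝ (Fin m) → F) (r : ℝ) :
    ∫ z in ball (0 : EuclideanSpace ℝ (Fin m)) r, f (e z) = ∫ z in ball 0 r, f z := by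
  have h1 : e ⁻¹' (ball 0 r) = ball 0 r := by
    ext z
    simp only [Set.mem_preimage, mem_ball, dist_zero_right]
    rw [← e.norm_map z]
  calc ∫ z in ball (0 : EuclideanSpace ℝ (Fin m)) r, f (e z)
      = ∫ z in e ⁻¹' (ball 0 r), f (e z) := by rw [h1]
    _ = ∫ z in ball 0 r, f z :=
        e.measurePreserving.setIntegral_preimage_emb
          e.toContinuousLinearEquiv.toHomeomorph.measurableEmbedding f _

noncomputable def reflCoord (i : Fin m) :
    EuclideanSpace ℝ (Fin m) ≃ₗᵢ[ℝ] EuclideanSpace ℝ (Fin m) :=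
  LinearIsometryEquiv.piLpCongrRight 2
    (fun j => if j = i then LinearIsometryEquiv.neg ℝ else LinearIsometryEquiv.refl ℝ ℝ)

lemma reflCoord_apply (i j : Fin m) (z : EuclideanSpace ℝ (Fin m)) :
    reflCoord i z j = if j = i then -z j else z j := by
  simp only [reflCoord, LinearIsometryEquiv.piLpCongrRight_apply]
  by_cases h : j = i
  · subst h; simp
  · simp [h]

lemma int_coord_mul_ne (r : ℝ) (i j : Fin m) (hij : i ≠ j) :
    ∫ z in ball (0 : EuclideanSpace ℝ (Fin m)) r, z i * z j = 0 := by
  have h := isom_setIntegral (reflCoord i) (fun z => z i * z j) r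
  simp only [reflCoord_apply, if_neg (Ne.symm hij), if_pos] at h
  have : ∫ z in ball (0 : EuclideanSpace ℝ (Fin m)) r, -(z i * z j)
      = ∫ z in ball (0 : EuclideanSpace ℝ (Fin m)) r, z i * z j := by
    rw [← h]; congr 1; ext z; ring
  rw [integral_neg] at this
  linarith

lemma cont_integrableOn_ball {f : EuclideanSpace ℝ (Fin m) → ℝ} (hf : Continuous f)
    (c : EuclideanSpace ℝ (Fin m)) (r : ℝ) : IntegrableOn f (ball c r) volume :=
  (hf.continuousOn.integrableOn_compact (isCompact_closedBall c r)).mono_set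
    ball_subset_closedBall

lemma cont_coord (i : Fin m) : Continuous fun z : EuclideanSpace ℝ (Fin m) => z i := by
  exact (EuclideanSpace.proj i).continuous

lemma int_coord_sq_eq (r : ℝ) (i j : Fin m) :
    ∫ z in ball (0 : EuclideanSpace ℝ (Fin m)) r, (z i)^2
      = ∫ z in ball (0 : EuclideanSpace ℝ (Fin m)) r, (z j)^2 := by
  have h := isom_setIntegral (LinearIsometryEquiv.piLpCongrLeft 2 ℝ ℝ (Equiv.swap i j))
    (fun z => (z i)^2) r
  rw [← h]
  congr 1; ext z
  simp only [LinearIsometryEquiv.piLpCongrLeft_apply, Equiv.piCongrLeft'_apply]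
  rw [Equiv.symm_swap, Equiv.swap_apply_left]

lemma int_norm_sq (hm : 0 < m) (r : ℝ) (hr : 0 < r) :
    ∫ z in ball (0 : EuclideanSpace ℝ (Fin m)) r, ‖z‖^2
      = m * (volume (ball (0 : EuclideanSpace ℝ (Fin m)) 1)).toReal * (r^(m+2) / (m+2)) := by
  have : Nontrivial (EuclideanSpace ℝ (Fin m)) := by
    rcases m with _ | m
    · omega
    · infer_instance
  have key := integral_fun_norm_addHaar (volume : Measure (EuclideanSpace ℝ (Fin m)))
    (Set.indicator (Set.Iio r) (fun t => t^2))
  rw [show (fun x : EuclideanSpace ℝ (Fin m) => Set.indicator (Set.Iio r) (fun t => t^2) ‖x‖)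
      = Set.indicator (ball 0 r) (fun x => ‖x‖^2) from ?_] at key
  · rw [integral_indicator measurableSet_ball] at key
    rw [key, finrank_euclideanSpace_fin]
    have h2 : ∀ y : ℝ, y ^ (m - 1) • Set.indicator (Set.Iio r) (fun t => t^2) y
        = Set.indicator (Set.Iio r) (fun t => t ^ (m+1)) y := by
      intro y
      by_cases hy : y ∈ Set.Iio r
      · simp only [Set.indicator_of_mem hy, smul_eq_mul]
        rw [← pow_add]
        congr 1
        omega
      · simp [Set.indicator_of_notMem hy]
    simp only [h2]
    rw [setIntegral_indicator measurableSet_Iio, Set.Ioi_inter_Iio]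
    have hI : ∫ y in Set.Ioo (0:ℝ) r, y ^ (m+1) = r^(m+2)/(m+2) := by
      rw [← integral_Ioc_eq_integral_Ioo, ← intervalIntegral.integral_of_le hr.le,
        integral_pow, show m+1+1 = m+2 from rfl, zero_pow (by omega)]
      push_cast
      ring
    rw [hI]
    simp only [nsmul_eq_mul, smul_eq_mul, measureReal_def]
    ring
  · ext x
    by_cases hx : x ∈ ball (0 : EuclideanSpace ℝ (Fin m)) r
    · rw [Set.indicator_of_mem hx]
      rw [mem_ball, dist_zero_right] at hx
      rw [Set.indicator_of_mem (Set.mem_Iio.2 hx)]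
    · rw [Set.indicator_of_notMem hx]
      rw [mem_ball, dist_zero_right] at hx
      rw [Set.indicator_of_notMem (by simpa using hx)]

lemma int_coord_sq (hm : 0 < m) (r : ℝ) (hr : 0 < r) (i : Fin m) :
    ∫ z in ball (0 : EuclideanSpace ℝ (Fin m)) r, (z i)^2
      = (volume (ball (0 : EuclideanSpace ℝ (Fin m)) 1)).toReal * (r^(m+2) / (m+2)) := by
  have hsum : ∑ j : Fin m, ∫ z in ball (0 : EuclideanSpace ℝ (Fin m)) r, (z j)^2
      = ∫ z in ball (0 : EuclideanSpace ℝ (Fin m)) r, ‖z‖^2 := by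
    rw [← integral_finset_sum]
    · congr 1; ext z
      rw [EuclideanSpace.norm_eq, sq_sqrt (by positivity)]
      simp [sq_abs]
    · intro j _
      exact cont_integrableOn_ball ((cont_coord j).pow 2) _ _
  have heq : ∀ j : Fin m, ∫ z in ball (0 : EuclideanSpace ℝ (Fin m)) r, (z j)^2
      = ∫ z in ball (0 : EuclideanSpace ℝ (Fin m)) r, (z i)^2 := fun j => int_coord_sq_eq r j i
  simp only [heq, Finset.sum_const, Finset.card_univ, Fintype.card_fin, nsmul_eq_mul] at hsum
  rw [int_norm_sq hm r hr] at hsum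
  have hm' : (m : ℝ) ≠ 0 := Nat.cast_ne_zero.2 hm.ne'
  have : (m:ℝ) * ∫ z in ball (0 : EuclideanSpace ℝ (Fin m)) r, (z i)^2
      = (m:ℝ) * ((volume (ball (0 : EuclideanSpace ℝ (Fin m)) 1)).toReal * (r^(m+2) / (m+2))) :=
    hsum.trans (by ring)
  exact mul_left_cancel₀ hm' this

lemma int_quadratic (hm : 0 < m)
    (Q : EuclideanSpace ℝ (Fin m) →L[ℝ] EuclideanSpace ℝ (Fin m) →L[ℝ] ℝ)
    (r : ℝ) (hr : 0 < r) :
    ∫ z in ball (0 : EuclideanSpace ℝ (Fin m)) r, Q z z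
      = (volume (ball (0 : EuclideanSpace ℝ (Fin m)) 1)).toReal * (r^(m+2) / (m+2))
        * ∑ i, Q (EuclideanSpace.single i 1) (EuclideanSpace.single i 1) := by
  have hexp : ∀ z : EuclideanSpace ℝ (Fin m),
      Q z z = ∑ i, ∑ j, Q (EuclideanSpace.single i 1) (EuclideanSpace.single j 1) * (z i * z j) := by
    intro z
    conv_lhs => rw [← (EuclideanSpace.basisFun (Fin m) ℝ).sum_repr z]
    simp only [EuclideanSpace.basisFun_repr, EuclideanSpace.basisFun_apply, map_sum, _root_.map_smul,
      ContinuousLinearMap.sum_apply, ContinuousLinearMap.coe_sum', ContinuousLinearMap.smul_apply,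
      smul_eq_mul, Finset.sum_apply]
    simp only [Finset.mul_sum]
    rw [Finset.sum_comm]
    exact Finset.sum_congr rfl fun i _ => Finset.sum_congr rfl fun j _ => by ring
  rw [integral_congr_ae (Filter.Eventually.of_forall fun z => hexp z), integral_finset_sum]
  · have hinner : ∀ i : Fin m,
        ∫ z in ball (0 : EuclideanSpace ℝ (Fin m)) r,
          ∑ j, Q (EuclideanSpace.single i 1) (EuclideanSpace.single j 1) * (z i * z j)
        = Q (EuclideanSpace.single i 1) (EuclideanSpace.single i 1)
            * ((volume (ball (0 : EuclideanSpace ℝ (Fin m)) 1)).toReal * (r^(m+2) / (m+2))) := by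
      intro i
      rw [integral_finset_sum]
      · rw [Finset.sum_eq_single i]
        · rw [integral_const_mul]
          have : ∀ z : EuclideanSpace ℝ (Fin m), z i * z i = (z i)^2 := fun z => (sq (z i)).symm
          simp only [this]
          rw [int_coord_sq hm r hr i]
        · intro j _ hj
          rw [integral_const_mul, int_coord_mul_ne r i j (fun h => hj h.symm), mul_zero]
        · intro h; exact absurd (Finset.mem_univ i) h
      · intro j _
        exact (cont_integrableOn_ball ((cont_coord i).mul (cont_coord j)) _ _).const_mul _
    rw [Finset.sum_congr rfl fun i _ => hinner i, ← Finset.sum_mul, mul_comm]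
  · intro i _
    exact integrable_finset_sum _ fun j _ =>
      (cont_integrableOn_ball ((cont_coord i).mul (cont_coord j)) _ _).const_mul _

lemma volume_ball_toReal (hm : 0 < m) (r : ℝ) (hr : 0 ≤ r) (x : EuclideanSpace ℝ (Fin m)) :
    (volume (ball x r)).toReal
      = r^m * (volume (ball (0 : EuclideanSpace ℝ (Fin m)) 1)).toReal := by
  have : Nontrivial (EuclideanSpace ℝ (Fin m)) := by
    rcases m with _ | m'
    · omega
    · infer_instance
  rw [Measure.addHaar_ball volume x hr, finrank_euclideanSpace_fin,
    ENNReal.toReal_mul, ENNReal.toReal_ofReal (by positivity)]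

lemma setIntegral_ball_sub {F : Type*} [NormedAddCommGroup F] [NormedSpace ℝ F]
    (x : EuclideanSpace ℝ (Fin m)) (r : ℝ) (f : EuclideanSpace ℝ (Fin m) → F) :
    ∫ y in ball x r, f (y - x) = ∫ z in ball (0 : EuclideanSpace ℝ (Fin m)) r, f z := by
  have h := (measurePreserving_add_right (volume : Measure (EuclideanSpace ℝ (Fin m))) x)
    |>.setIntegral_preimage_emb (MeasurableEquiv.addRight x).measurableEmbedding
    (fun y => f (y - x)) (ball x r)
  have hpre : (· + x) ⁻¹' (ball x r) = ball (0 : EuclideanSpace ℝ (Fin m)) r := by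
    ext z
    simp [mem_ball, dist_eq_norm]
  rw [hpre] at h
  rw [← h]
  congr 1; ext z; simp

lemma int_id_ball_zero (r : ℝ) :
    ∫ z in ball (0 : EuclideanSpace ℝ (Fin m)) r, z = 0 := by
  have h := isom_setIntegral (LinearIsometryEquiv.neg ℝ
    (E := EuclideanSpace ℝ (Fin m))) id r
  simp only [LinearIsometryEquiv.coe_neg, id_eq] at h
  rw [integral_neg] at h
  have h2 : (∫ z in ball (0 : EuclideanSpace ℝ (Fin m)) r, z)
      + ∫ z in ball (0 : EuclideanSpace ℝ (Fin m)) r, z = 0 :=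
    add_eq_zero_iff_eq_neg.2 h.symm
  have h3 : (2:ℝ) • (∫ z in ball (0 : EuclideanSpace ℝ (Fin m)) r, z) = 0 := by
    rw [two_smul]; exact h2
  rcases smul_eq_zero.mp h3 with h4 | h4
  · norm_num at h4
  · exact h4

lemma cont_integrableOn_ball' {F : Type*} [NormedAddCommGroup F] [NormedSpace ℝ F]
    {f : EuclideanSpace ℝ (Fin m) → F} (hf : Continuous f)
    (c : EuclideanSpace ℝ (Fin m)) (r : ℝ) : IntegrableOn f (ball c r) volume :=
  (hf.continuousOn.integrableOn_compact (isCompact_closedBall c r)).mono_set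
    ball_subset_closedBall

lemma quad_hasFDerivAt
    (Q : EuclideanSpace ℝ (Fin m) →L[ℝ] EuclideanSpace ℝ (Fin m) →L[ℝ] ℝ)
    (hsymm : ∀ v w, Q v w = Q w v) (x y : EuclideanSpace ℝ (Fin m)) :
    HasFDerivAt (fun z => Q (z - x) (z - x) / 2) (Q (y - x)) y := by
  have hb := Q.isBoundedBilinearMap
  have h1 : HasFDerivAt (fun z : EuclideanSpace ℝ (Fin m) => (z - x, z - x))
      ((ContinuousLinearMap.id ℝ (EuclideanSpace ℝ (Fin m))).prod
        (ContinuousLinearMap.id ℝ (EuclideanSpace ℝ (Fin m)))) y :=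
    HasFDerivAt.prodMk ((hasFDerivAt_id y).sub_const x) ((hasFDerivAt_id y).sub_const x)
  have h2 := (hb.hasFDerivAt (y - x, y - x)).comp y h1
  have hfn : (fun z : EuclideanSpace ℝ (Fin m) => Q (z - x) (z - x) / 2)
      = fun z => (2⁻¹ : ℝ) • Q (z - x) (z - x) := by
    funext z; simp [smul_eq_mul]; ring
  rw [hfn]
  have h3 := h2.const_smul (2⁻¹ : ℝ)
  refine h3.congr_fderiv ?_
  ext w
  simp only [ContinuousLinearMap.smul_apply, ContinuousLinearMap.coe_comp',
    Function.comp_apply, ContinuousLinearMap.prod_apply, ContinuousLinearMap.coe_id', id_eq,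
    IsBoundedBilinearMap.deriv_apply, smul_eq_mul]
  rw [hsymm w (y - x)]
  ring

lemma taylor_bound {u : EuclideanSpace ℝ (Fin m) → ℝ} {x : EuclideanSpace ℝ (Fin m)}
    {D : Set (EuclideanSpace ℝ (Fin m))} (hD : IsOpen D) (hx : x ∈ D)
    (hu : ContDiffOn ℝ 2 u D) {ε : ℝ} (hε : 0 < ε) :
    ∀ᶠ r in 𝓝[>] (0:ℝ), ∀ y ∈ ball x r,
      |u y - u x - fderiv ℝ u x (y - x)
        - fderiv ℝ (fderiv ℝ u) x (y - x) (y - x) / 2| ≤ ε * r ^ 2 := by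
  obtain ⟨δ₁, hδ₁, hball⟩ := Metric.isOpen_iff.mp hD x hx
  have hca : ContDiffAt ℝ 2 u x := hu.contDiffAt (hD.mem_nhds hx)
  have hQd : DifferentiableAt ℝ (fderiv ℝ u) x :=
    (hca.fderiv_right (m := 1) le_rfl).differentiableAt one_ne_zero
  have hsymm : ∀ v w, fderiv ℝ (fderiv ℝ u) x v w = fderiv ℝ (fderiv ℝ u) x w v :=
    hca.isSymmSndFDerivAt (by simp [minSmoothness_of_isRCLikeNormedField])
  have hlo := hQd.hasFDerivAt.isLittleO
  rw [Asymptotics.isLittleO_iff] at hlo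
  obtain ⟨δ₂, hδ₂pos, hδ₂⟩ := Metric.eventually_nhds_iff.mp (hlo hε)
  have hδ : 0 < min δ₁ δ₂ := lt_min hδ₁ hδ₂pos
  filter_upwards [Ioo_mem_nhdsGT_of_mem ⟨le_refl (0:ℝ), hδ⟩] with r hr y hy
  set f' := fderiv ℝ u x with hf'
  set Q := fderiv ℝ (fderiv ℝ u) x with hQ
  have hrδ₁ : r < δ₁ := lt_of_lt_of_le hr.2 (min_le_left _ _)
  have hrδ₂ : r < δ₂ := lt_of_lt_of_le hr.2 (min_le_right _ _)
  have hsubD : ball x r ⊆ D := fun z hz => hball (mem_ball.mpr (lt_trans (mem_ball.mp hz) hrδ₁))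
  set g := fun y => u y - f' (y - x) - Q (y - x) (y - x) / 2 with hg
  have hder : ∀ z ∈ ball x r,
      HasFDerivWithinAt g (fderiv ℝ u z - f' - Q (z - x)) (ball x r) z := by
    intro z hz
    have h1 : HasFDerivAt u (fderiv ℝ u z) z :=
      ((hu.contDiffAt (hD.mem_nhds (hsubD hz))).differentiableAt (by norm_num)).hasFDerivAt
    have h2 : HasFDerivAt (fun y => f' (y - x)) f' z := by
      have he : (fun y : EuclideanSpace ℝ (Fin m) => f' (y - x)) = fun y => f' y - f' x := by
        funext y; rw [map_sub]
      rw [he]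
      exact f'.hasFDerivAt.sub_const _
    exact ((h1.sub h2).sub (quad_hasFDerivAt Q hsymm x z)).hasFDerivWithinAt
  have hbound : ∀ z ∈ ball x r, ‖fderiv ℝ u z - f' - Q (z - x)‖ ≤ ε * r := by
    intro z hz
    have hz' : dist z x < δ₂ := lt_trans (mem_ball.mp hz) hrδ₂
    calc ‖fderiv ℝ u z - f' - Q (z - x)‖ ≤ ε * ‖z - x‖ := hδ₂ hz'
      _ ≤ ε * r := by
          have : ‖z - x‖ ≤ r := by
            rw [← dist_eq_norm]; exact (mem_ball.mp hz).le
          exact mul_le_mul_of_nonneg_left this hε.le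
  have key := (convex_ball x r).norm_image_sub_le_of_norm_hasFDerivWithin_le hder hbound
    (mem_ball_self hr.1) hy
  have hgx : g x = u x := by simp [hg]
  rw [hgx, Real.norm_eq_abs] at key
  have hyx : ‖y - x‖ ≤ r := by rw [← dist_eq_norm]; exact (mem_ball.mp hy).le
  calc |u y - u x - f' (y - x) - Q (y - x) (y - x) / 2|
      = |g y - u x| := by rw [hg]; ring_nf
    _ ≤ ε * r * ‖y - x‖ := key
    _ ≤ ε * r ^ 2 := by nlinarith [mul_le_mul_of_nonneg_left hyx (mul_nonneg hε.le hr.1.le)]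

lemma ball_avg_tendsto (hm : 0 < m) {D : Set (EuclideanSpace ℝ (Fin m))} (hD : IsOpen D)
    {u : EuclideanSpace ℝ (Fin m) → ℝ} (hu : ContDiffOn ℝ 2 u D)
    {x : EuclideanSpace ℝ (Fin m)} (hx : x ∈ D) :
    Tendsto (fun r => ((⨍ y in ball x r, u y) - u x) / r ^ 2) (𝓝[>] 0)
      (𝓝 ((∑ i, fderiv ℝ (fderiv ℝ u) x (EuclideanSpace.single i 1) (EuclideanSpace.single i 1))
          / (2 * (m + 2)))) := by
  set Q := fderiv ℝ (fderiv ℝ u) x with hQdef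
  set f' := fderiv ℝ u x with hf'def
  set S := (∑ i, Q (EuclideanSpace.single i 1) (EuclideanSpace.single i 1)) / (2 * (m + 2)) with hSdef
  set c1 := (volume (ball (0 : EuclideanSpace ℝ (Fin m)) 1)).toReal with hc1def
  have hc1pos : 0 < c1 := by
    rw [hc1def]
    exact ENNReal.toReal_pos (measure_ball_pos volume _ one_pos).ne' measure_ball_lt_top.ne
  obtain ⟨δ₁, hδ₁, hball⟩ := Metric.isOpen_iff.mp hD x hx
  rw [Metric.tendsto_nhds]
  intro ε hε
  have hε2 : 0 < ε / 2 := by linarith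
  filter_upwards [taylor_bound hD hx hu hε2,
    Ioo_mem_nhdsGT_of_mem ⟨le_refl (0:ℝ), half_pos hδ₁⟩] with r hB hr
  have hrpos : 0 < r := hr.1
  have hsubD : closedBall x r ⊆ D := fun z hz =>
    hball (mem_ball.mpr (lt_of_le_of_lt (mem_closedBall.mp hz) (by linarith [hr.2])))
  -- integrability
  have hu_int : IntegrableOn u (ball x r) volume :=
    (((hu.continuousOn).mono hsubD).integrableOn_compact (isCompact_closedBall x r)).mono_set
      ball_subset_closedBall
  have hconst_int : IntegrableOn (fun _ => u x) (ball x r) volume :=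
    integrableOn_const measure_ball_lt_top.ne
  have hlin_int : IntegrableOn (fun y => f' (y - x)) (ball x r) volume :=
    cont_integrableOn_ball (f'.continuous.comp (continuous_id.sub continuous_const)) x r
  have hquad_cont : Continuous (fun y : EuclideanSpace ℝ (Fin m) => Q (y - x) (y - x) / 2) := by
    have hc : Continuous (fun y : EuclideanSpace ℝ (Fin m) => (y - x, y - x)) :=
      (continuous_id.sub continuous_const).prodMk (continuous_id.sub continuous_const)
    exact (Q.isBoundedBilinearMap.continuous.comp hc).div_const 2
  have hquad_int : IntegrableOn (fun y => Q (y - x) (y - x) / 2) (ball x r) volume :=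
    cont_integrableOn_ball hquad_cont x r
  set V := (volume (ball x r)).toReal with hVdef
  have hV : V = r ^ m * c1 := volume_ball_toReal hm r hrpos.le x
  have hVpos : 0 < V := by
    rw [hV]; positivity
  -- linear term zero
  have hlin0 : ∫ y in ball x r, f' (y - x) = 0 := by
    rw [setIntegral_ball_sub x r (fun z => f' z),
      show (∫ z in ball (0 : EuclideanSpace ℝ (Fin m)) r, f' z)
          = f' (∫ z in ball (0 : EuclideanSpace ℝ (Fin m)) r, z) from
        f'.integral_comp_comm (cont_integrableOn_ball' continuous_id 0 r),
      int_id_ball_zero, map_zero]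
  -- quadratic term value
  have hquadVal : ∫ y in ball x r, Q (y - x) (y - x) / 2
      = c1 * (r ^ (m + 2) / (m + 2)) * (∑ i, Q (EuclideanSpace.single i 1)
          (EuclideanSpace.single i 1)) / 2 := by
    rw [integral_div, setIntegral_ball_sub x r (fun z => Q z z), int_quadratic hm Q r hrpos]
  set R := ∫ y in ball x r, (u y - u x - f' (y - x) - Q (y - x) (y - x) / 2) with hRdef
  have hRval : R = (∫ y in ball x r, u y) - V * u x - 0
      - c1 * (r ^ (m + 2) / (m + 2)) * (∑ i, Q (EuclideanSpace.single i 1)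
          (EuclideanSpace.single i 1)) / 2 := by
    have hA_int : IntegrableOn (fun y => u y - u x) (ball x r) volume :=
      hu_int.sub hconst_int
    have hA2_int : IntegrableOn (fun y => u y - u x - f' (y - x)) (ball x r) volume :=
      hA_int.sub hlin_int
    rw [hRdef, integral_sub hA2_int hquad_int, integral_sub hA_int hlin_int,
      integral_sub hu_int hconst_int, setIntegral_const, hlin0, hquadVal, smul_eq_mul, measureReal_def]
  have hRbd : |R| ≤ ε / 2 * r ^ 2 * V := by
    have := norm_setIntegral_le_of_norm_le_const (C := ε / 2 * r ^ 2)
      (μ := volume) (s := ball x r)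
      (f := fun y => u y - u x - f' (y - x) - Q (y - x) (y - x) / 2)
      measure_ball_lt_top
      (fun y hy => by rw [Real.norm_eq_abs]; exact hB y hy)
    have hmeas := ((((hu_int.sub hconst_int).sub hlin_int).sub hquad_int)).aestronglyMeasurable
    have h2 := this
    exact h2
  -- final algebra
  have hm2 : ((m : ℝ) + 2) ≠ 0 := by positivity
  have hkey : ((⨍ y in ball x r, u y) - u x) / r ^ 2 - S = R / (V * r ^ 2) := by
    rw [setAverage_eq, smul_eq_mul, measureReal_def, ← hVdef]
    have hintu : ∫ y in ball x r, u y = R + V * u x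
        + c1 * (r ^ (m + 2) / (m + 2)) * (∑ i, Q (EuclideanSpace.single i 1)
            (EuclideanSpace.single i 1)) / 2 := by
      rw [hRval]; ring
    rw [hintu, hSdef, hV]
    have hrm : r ^ (m + 2) = r ^ m * r ^ 2 := by rw [pow_add]
    rw [hrm]
    field_simp
    ring
  rw [Real.dist_eq, hkey, abs_div, abs_of_pos (by positivity : (0:ℝ) < V * r ^ 2)]
  calc |R| / (V * r ^ 2) ≤ ε / 2 * r ^ 2 * V / (V * r ^ 2) := by
        apply div_le_div_of_nonneg_right ?_ (by positivity)
        · exact hRbd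
    _ = ε / 2 := by field_simp
    _ < ε := by linarith

lemma lap_eq {u : EuclideanSpace ℝ (Fin m) → ℝ} {x : EuclideanSpace ℝ (Fin m)}
    (hQd : DifferentiableAt ℝ (fderiv ℝ u) x) :
    lap m u x = ∑ i, fderiv ℝ (fderiv ℝ u) x (EuclideanSpace.single i 1)
      (EuclideanSpace.single i 1) := by
  unfold lap
  refine Finset.sum_congr rfl fun i _ => ?_
  have h := fderiv_clm_apply (c := fun y => fderiv ℝ u y)
    (u := fun _ => EuclideanSpace.single (𝕜 := ℝ) i 1) hQd (differentiableAt_const _)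
  rw [h]
  simp

theorem stmt4 (m : ℕ) (hm : 2 ≤ m) (D : Set (EuclideanSpace ℝ (Fin m))) (hD : IsOpen D)
    (u : EuclideanSpace ℝ (Fin m) → ℝ) (hu : ContDiffOn ℝ 2 u D) (hDc : IsConnected D) (l : ℝ) (hl : l ≠ 0) :
    (∀ x ∈ D, lap m u x + l ^ 2 * u x = 0) ↔
      ∀ x ∈ D, Tendsto (fun r => (ballMean m u x r - u x) / r ^ 2) (𝓝[>] 0)
        (𝓝 (-(l ^ 2 * u x) / (2 * (m + 2)))) := by
  have hm0 : 0 < m := by omega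
  constructor
  · intro h x hx
    have ht := ball_avg_tendsto hm0 hD hu hx
    have hQd : DifferentiableAt ℝ (fderiv ℝ u) x :=
      ((hu.contDiffAt (hD.mem_nhds hx)).fderiv_right (m := 1) le_rfl).differentiableAt one_ne_zero
    have hlap := lap_eq hQd
    have heq : (∑ i, fderiv ℝ (fderiv ℝ u) x (EuclideanSpace.single i 1)
          (EuclideanSpace.single i 1)) / (2 * ((m:ℝ) + 2)) = -(l ^ 2 * u x) / (2 * (m + 2)) := by
      rw [← hlap]
      have := h x hx
      congr 1
      linarith
    rw [← heq]
    simpa [ballMean] using ht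
  · intro h x hx
    have ht := ball_avg_tendsto hm0 hD hu hx
    have h2 := h x hx
    simp only [ballMean] at h2
    have hQd : DifferentiableAt ℝ (fderiv ℝ u) x :=
      ((hu.contDiffAt (hD.mem_nhds hx)).fderiv_right (m := 1) le_rfl).differentiableAt one_ne_zero
    have hlap := lap_eq hQd
    have huniq := tendsto_nhds_unique h2 ht
    rw [← hlap] at huniq
    have hm2 : (2 * ((m:ℝ) + 2)) ≠ 0 := by positivity
    have hcancel : -(l ^ 2 * u x) = lap m u x := by
      have h3 := congrArg (fun t => t * (2 * ((m:ℝ) + 2))) huniq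
      simp only [div_mul_cancel₀ _ hm2] at h3
      exact h3
    linarith
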